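/- Let X = {(x,y) ∈ ℝ² : x³ = y²} and φ(x,y) = y^{1/3}. For every m ≥ 1, a function f : X → ℝ has the property that f ∘ p is real analytic at 0 for every polynomial m-plot p in X if and only if f = g ∘ φ for some real analytic function g : ℝ → ℝ. -/

import Mathlib

open Topology Filter

/-- The real cube root. -/
noncomputable def realCbrt (y : ℝ) : ℝ :=
  if 0 ≤ y then y ^ ((1 : ℝ) / 3) else -((-y) ^ ((1 : ℝ) / 3))

lemma realCbrt_cube (t : ℝ) : realCbrt (t ^ 3) = t := by
  have key : ∀ s : ℝ, 0 ≤ s → (s ^ 3) ^ ((1:ℝ)/3) = s := by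
    intro s hs
    rw [← Real.rpow_natCast s 3, ← Real.rpow_mul hs]
    norm_num
  rcases le_or_gt 0 t with ht | ht
  · rw [realCbrt, if_pos (by positivity)]
    exact key t ht
  · have h3 : t ^ 3 < 0 := Odd.pow_neg (by decide) ht
    rw [realCbrt, if_neg (not_le.mpr h3)]
    have : -(t ^ 3) = (-t) ^ 3 := by ring
    rw [this, key (-t) (by linarith)]
    ring

lemma analyticAt_mveval {m : ℕ} (q : MvPolynomial (Fin m) ℝ) (x : Fin m → ℝ) :
    AnalyticAt ℝ (fun y => MvPolynomial.eval y q) x := by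
  induction q using MvPolynomial.induction_on with
  | C a => simpa using analyticAt_const
  | add p q hp hq => simpa [Pi.add_def] using hp.add hq
  | mul_X p n hp =>
      have hn : AnalyticAt ℝ (fun y : Fin m → ℝ => y n) x :=
        (ContinuousLinearMap.proj (R := ℝ) (φ := fun _ : Fin m => ℝ) n).analyticAt x
      simpa [Pi.mul_def] using hp.mul hn

lemma cube_extract {m : ℕ} (a b : MvPolynomial (Fin m) ℝ) (h : a ^ 3 = b ^ 2) :
    ∃ r : MvPolynomial (Fin m) ℝ, r ^ 2 = a ∧ r ^ 3 = b := by
  by_cases ha : a = 0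
  · refine ⟨0, by simp [ha], ?_⟩
    have h2 : b ^ 2 = 0 := by rw [← h, ha]; ring
    have hb : b = 0 := pow_eq_zero_iff (by norm_num) |>.mp h2
    simp [hb]
  · let K := FractionRing (MvPolynomial (Fin m) ℝ)
    let i : MvPolynomial (Fin m) ℝ →+* K := algebraMap _ K
    have hinj : Function.Injective i := IsFractionRing.injective _ K
    have hia : i a ≠ 0 := fun hz => ha (hinj (by simpa using hz))
    have hab : (i b) ^ 2 = (i a) ^ 3 := by rw [← map_pow, ← map_pow, h]
    have hq2 : (i b / i a) ^ 2 = i a := by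
      rw [div_pow, hab]
      rw [div_eq_iff (pow_ne_zero 2 hia)]
      ring
    have hint : IsIntegral (MvPolynomial (Fin m) ℝ) (i b / i a) := by
      refine ⟨Polynomial.X ^ 2 - Polynomial.C a, Polynomial.monic_X_pow_sub_C a (by norm_num), ?_⟩
      simpa using sub_eq_zero.mpr hq2
    obtain ⟨r, hr⟩ := IsIntegrallyClosed.isIntegral_iff.mp hint
    have hr' : i r = i b / i a := hr
    refine ⟨r, hinj ?_, hinj ?_⟩
    · rw [map_pow, hr', hq2]
    · rw [map_pow, hr', div_pow]
      rw [show (i b) ^ 3 = (i b) * (i b) ^ 2 by ring, hab]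
      rw [mul_div_assoc, div_self (pow_ne_zero 3 hia), mul_one]

lemma cube_realCbrt (y : ℝ) : (realCbrt y) ^ 3 = y := by
  have key : ∀ s : ℝ, 0 ≤ s → (s ^ ((1:ℝ)/3)) ^ 3 = s := by
    intro s hs
    rw [← Real.rpow_natCast (s ^ ((1:ℝ)/3)) 3, ← Real.rpow_mul hs]
    norm_num
  rcases le_or_gt 0 y with hy | hy
  · rw [realCbrt, if_pos hy]; exact key y hy
  · rw [realCbrt, if_neg (not_le.mpr hy)]
    have := key (-y) (by linarith)
    nlinarith [this]

/-- for `X = {(x,y) : x³ = y²}` and `φ(x,y) = y^{1/3}`, a function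
`f : X → ℝ` has real analytic composites with all polynomial `m`-plots in `X` if and only
if `f = g ∘ φ` on `X` for some real analytic `g : ℝ → ℝ`. -/
theorem stmt19 (m : ℕ) (hm : 0 < m) (f : ℝ × ℝ → ℝ) :
    (∀ p : (Fin m → ℝ) → ℝ × ℝ,
      (∃ q₁ q₂ : MvPolynomial (Fin m) ℝ,
        ∀ x, p x = (MvPolynomial.eval x q₁, MvPolynomial.eval x q₂)) →
      (∀ᶠ x in 𝓝 (0 : Fin m → ℝ), (p x).1 ^ 3 = (p x).2 ^ 2) →
      AnalyticAt ℝ (f ∘ p) 0)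
    ↔ ∃ g : ℝ → ℝ, (∀ t : ℝ, AnalyticAt ℝ g t) ∧
        ∀ z : ℝ × ℝ, z.1 ^ 3 = z.2 ^ 2 → f z = g (realCbrt z.2) := by
  have hcubeinj : Function.Injective (fun s : ℝ => s ^ 3) :=
    (Odd.strictMono_pow (R := ℝ) (by decide)).injective
  constructor
  · intro H
    refine ⟨fun t => f (t ^ 2, t ^ 3), ?_, ?_⟩
    · intro t₀
      set n : Fin m := ⟨0, hm⟩
      set p : (Fin m → ℝ) → ℝ × ℝ :=
        fun x => ((t₀ + x n) ^ 2, (t₀ + x n) ^ 3) with hp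
      have hplot : ∃ q₁ q₂ : MvPolynomial (Fin m) ℝ,
          ∀ x, p x = (MvPolynomial.eval x q₁, MvPolynomial.eval x q₂) := by
        refine ⟨(MvPolynomial.C t₀ + MvPolynomial.X n) ^ 2,
          (MvPolynomial.C t₀ + MvPolynomial.X n) ^ 3, fun x => ?_⟩
        simp [hp]
      have hcond : ∀ᶠ x in 𝓝 (0 : Fin m → ℝ), (p x).1 ^ 3 = (p x).2 ^ 2 := by
        filter_upwards with x
        show ((t₀ + x n) ^ 2) ^ 3 = ((t₀ + x n) ^ 3) ^ 2
        ring
      have hfp := H p hplot hcond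
      have hL : AnalyticAt ℝ (fun t : ℝ => (fun _ : Fin m => t - t₀)) t₀ := by
        have : AnalyticAt ℝ (fun t : ℝ => t - t₀) t₀ :=
          (analyticAt_id).sub analyticAt_const
        exact AnalyticAt.pi fun _ => this
      have h0 : (fun _ : Fin m => t₀ - t₀) = (0 : Fin m → ℝ) := by
        funext i; simp
      have hcomp : AnalyticAt ℝ ((f ∘ p) ∘ (fun t : ℝ => (fun _ : Fin m => t - t₀))) t₀ := by
        refine AnalyticAt.comp ?_ hL
        rwa [h0]
      have : ((f ∘ p) ∘ (fun t : ℝ => (fun _ : Fin m => t - t₀)))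
          = fun t => f (t ^ 2, t ^ 3) := by
        funext t
        simp [hp, Function.comp]
      rwa [this] at hcomp
    · intro z hz
      set t := realCbrt z.2 with ht
      have ht3 : t ^ 3 = z.2 := cube_realCbrt z.2
      have ht2 : z.1 = t ^ 2 := by
        apply hcubeinj
        simp only
        rw [hz, ← ht3]; ring
      have : z = (t ^ 2, t ^ 3) := by
        rw [Prod.ext_iff]; exact ⟨ht2, ht3.symm⟩
      rw [this]
  · rintro ⟨g, hg, hfg⟩ p ⟨q₁, q₂, hpq⟩ hev
    have heq : q₁ ^ 3 = q₂ ^ 2 := by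
      apply MvPolynomial.funext
      intro x
      have hA : AnalyticOnNhd ℝ (fun y => MvPolynomial.eval y (q₁ ^ 3)) Set.univ :=
        fun y _ => analyticAt_mveval _ y
      have hB : AnalyticOnNhd ℝ (fun y => MvPolynomial.eval y (q₂ ^ 2)) Set.univ :=
        fun y _ => analyticAt_mveval _ y
      have hev' : (fun y => MvPolynomial.eval y (q₁ ^ 3))
          =ᶠ[𝓝 (0 : Fin m → ℝ)] (fun y => MvPolynomial.eval y (q₂ ^ 2)) := by
        filter_upwards [hev] with y hy
        have := hpq y
        simp only [map_pow]
        rw [show MvPolynomial.eval y q₁ = (p y).1 by rw [this],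
          show MvPolynomial.eval y q₂ = (p y).2 by rw [this]]
        exact hy
      have := AnalyticOnNhd.eq_of_eventuallyEq hA hB hev'
      exact congrFun this x
    obtain ⟨r, hr2, hr3⟩ := cube_extract q₁ q₂ heq
    have hkey : (f ∘ p) = fun x => g (MvPolynomial.eval x r) := by
      funext x
      have hx := hpq x
      have h1 : MvPolynomial.eval x q₁ = (MvPolynomial.eval x r) ^ 2 := by
        rw [← hr2, map_pow]
      have h2 : MvPolynomial.eval x q₂ = (MvPolynomial.eval x r) ^ 3 := by
        rw [← hr3, map_pow]
      have hzz : (p x).1 ^ 3 = (p x).2 ^ 2 := by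
        rw [hx]; simp only [h1, h2]; ring
      rw [Function.comp_apply, hfg (p x) hzz, hx]
      simp only [h2, realCbrt_cube]
    rw [hkey]
    exact (hg _).comp (analyticAt_mveval r 0)
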